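/- Let a₁, a₃, b₃ be real numbers and define n(x) = (1 − eˣ)·(2a₁ − a₃x + b₃·a₁·x) + (eˣ + 1)·(2 + b₃x). If one of the following holds: (a) b₃ = 0, a₃ = 0 and a₁ ∉ [−1, 1]; (b) b₃ = 0 and a₃ < 0; (c) b₃ ≠ 0 and a₃ ≤ 0; (d) b₃ < 0, a₃ > 0 and a₁ < a₃/b₃ + 1; (e) b₃ > 0, a₃ > 0 and a₁ > a₃/b₃ − 1; then there exists p ∈ ℝ with p ≠ 0 and n(p) = 0. -/

import Mathlib

/-- If the coefficient of `exp x * x` is negative, the function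
`exp x * (A + B*x) + (C + D*x)` takes a nonpositive value. -/
lemma aux_top (A B C D : ℝ) (hB : B < 0) :
    ∃ x : ℝ, Real.exp x * (A + B * x) + (C + D * x) ≤ 0 := by
  set x₀ : ℝ := max (max 1 (A / (-B))) ((A + B + D + |A + C|) / (-B)) with hx₀
  have hBpos : 0 < -B := by linarith
  have hx1 : (1 : ℝ) ≤ x₀ := le_trans (le_max_left _ _) (le_max_left _ _)
  have h2 : A + B * x₀ ≤ 0 := by
    have : A / (-B) ≤ x₀ := le_trans (le_max_right _ _) (le_max_left _ _)
    have := (div_le_iff₀ hBpos).mp this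
    nlinarith
  have h3 : B * x₀ + (A + B + D) ≤ -|A + C| := by
    have : (A + B + D + |A + C|) / (-B) ≤ x₀ := le_max_right _ _
    have := (div_le_iff₀ hBpos).mp this
    nlinarith
  refine ⟨x₀, ?_⟩
  have hexp : x₀ + 1 ≤ Real.exp x₀ := Real.add_one_le_exp x₀
  have hmul : Real.exp x₀ * (A + B * x₀) ≤ (x₀ + 1) * (A + B * x₀) :=
    mul_le_mul_of_nonpos_right hexp h2
  have habs1 : A + C ≤ |A + C| := le_abs_self _
  have habs2 : (0 : ℝ) ≤ |A + C| := abs_nonneg _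
  nlinarith [hmul, h3, hx1, habs1, habs2]

/-- If the coefficient of `x` (non-exponential part) is positive, the function
`exp x * (A + B*x) + (C + D*x)` takes a nonpositive value. -/
lemma aux_bot (A B C D : ℝ) (hD : 0 < D) :
    ∃ x : ℝ, Real.exp x * (A + B * x) + (C + D * x) ≤ 0 := by
  set x₀ : ℝ := -(|A| + |B| + |C| + 1) / D with hx₀
  have hxneg : x₀ ≤ 0 := by
    apply div_nonpos_of_nonpos_of_nonneg
    · nlinarith [abs_nonneg A, abs_nonneg B, abs_nonneg C]
    · linarith
  refine ⟨x₀, ?_⟩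
  have hDx : D * x₀ = -(|A| + |B| + |C| + 1) := by
    rw [hx₀, mul_div_cancel₀ _ hD.ne']
  have hexp1 : Real.exp x₀ ≤ 1 := Real.exp_le_one_iff.mpr hxneg
  have hexp0 : (0 : ℝ) < Real.exp x₀ := Real.exp_pos _
  -- exp x₀ * (-x₀) ≤ 1
  have hkey : Real.exp x₀ * (-x₀) ≤ 1 := by
    have h1 : -x₀ ≤ Real.exp (-x₀) := by
      have := Real.add_one_le_exp (-x₀); linarith
    have h2 : Real.exp x₀ * (-x₀) ≤ Real.exp x₀ * Real.exp (-x₀) :=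
      mul_le_mul_of_nonneg_left h1 (le_of_lt hexp0)
    rwa [← Real.exp_add, add_neg_cancel, Real.exp_zero] at h2
  have hbound : Real.exp x₀ * (A + B * x₀) ≤ |A| + |B| := by
    have h1 : A + B * x₀ ≤ |A| + |B| * (-x₀) := by
      have hA : A ≤ |A| := le_abs_self A
      have hB1 : B * x₀ ≤ |B| * (-x₀) := by
        have : B * (-x₀) ≥ -(|B| * (-x₀)) := by
          have := neg_abs_le B
          nlinarith [abs_nonneg B]
        nlinarith
      linarith
    calc Real.exp x₀ * (A + B * x₀) ≤ Real.exp x₀ * (|A| + |B| * (-x₀)) :=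
          mul_le_mul_of_nonneg_left h1 (le_of_lt hexp0)
      _ = Real.exp x₀ * |A| + |B| * (Real.exp x₀ * (-x₀)) := by ring
      _ ≤ |A| + |B| := by
          have hA1 : Real.exp x₀ * |A| ≤ |A| := by nlinarith [abs_nonneg A]
          have hB2 : |B| * (Real.exp x₀ * (-x₀)) ≤ |B| := by nlinarith [abs_nonneg B]
          linarith
  have hC : C ≤ |C| := le_abs_self C
  linarith [hbound, hDx.le, hDx.ge]

theorem stmt_3 (a₁ a₃ b₃ : ℝ)
    (n : ℝ → ℝ)
    (hn : ∀ x, n x = (1 - Real.exp x) * (2 * a₁ - a₃ * x + b₃ * a₁ * x) +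
      (Real.exp x + 1) * (2 + b₃ * x))
    (h : (b₃ = 0 ∧ a₃ = 0 ∧ a₁ ∉ Set.Icc (-1 : ℝ) 1) ∨
         (b₃ = 0 ∧ a₃ < 0) ∨
         (b₃ ≠ 0 ∧ a₃ ≤ 0) ∨
         (b₃ < 0 ∧ a₃ > 0 ∧ a₁ < a₃ / b₃ + 1) ∨
         (b₃ > 0 ∧ a₃ > 0 ∧ a₁ > a₃ / b₃ - 1)) :
    ∃ p : ℝ, p ≠ 0 ∧ n p = 0 := by
  -- Rewrite n in the form exp x * (A + Bx) + (C + Dx)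
  have hform : ∀ x, n x = Real.exp x * ((2 - 2 * a₁) + (a₃ + b₃ - b₃ * a₁) * x) +
      ((2 + 2 * a₁) + (b₃ + b₃ * a₁ - a₃) * x) := by
    intro x; rw [hn]; ring
  have h0 : n 0 = 4 := by
    rw [hn]; norm_num
  have hcont : Continuous n := by
    have : n = fun x => (1 - Real.exp x) * (2 * a₁ - a₃ * x + b₃ * a₁ * x) +
      (Real.exp x + 1) * (2 + b₃ * x) := funext hn
    rw [this]; continuity
  -- Key: any point with n q ≤ 0 yields a nonzero root by IVT.
  have key : ∀ q : ℝ, n q ≤ 0 → ∃ p : ℝ, p ≠ 0 ∧ n p = 0 := by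
    intro q hq
    have hsub := intermediate_value_uIcc (a := 0) (b := q) (f := n) hcont.continuousOn
    have hmem : (0 : ℝ) ∈ Set.uIcc (n 0) (n q) := by
      rw [h0]
      exact Set.mem_uIcc.mpr (Or.inr ⟨hq, by norm_num⟩)
    obtain ⟨p, _, hpz⟩ := hsub hmem
    refine ⟨p, ?_, hpz⟩
    intro hp0
    rw [hp0, h0] at hpz
    norm_num at hpz
  rcases h with ⟨hb, ha, hI⟩ | ⟨hb, ha⟩ | ⟨hb, ha⟩ | ⟨hb, ha, hA⟩ | ⟨hb, ha, hA⟩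
  · -- b₃ = 0, a₃ = 0, a₁ ∉ [-1,1]
    have hI' : a₁ < -1 ∨ 1 < a₁ := by
      by_contra hc
      push_neg at hc
      exact hI ⟨hc.1, hc.2⟩
    have hne : (2 : ℝ) - 2 * a₁ ≠ 0 := by
      rcases hI' with h' | h' <;> intro hz <;> nlinarith
    have hr : 0 < (-(2 + 2 * a₁)) / (2 - 2 * a₁) := by
      rcases hI' with h' | h'
      · apply div_pos <;> linarith
      · apply div_pos_of_neg_of_neg <;> linarith
    set q := Real.log ((-(2 + 2 * a₁)) / (2 - 2 * a₁)) with hq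
    apply key q
    have heq : Real.exp q = (-(2 + 2 * a₁)) / (2 - 2 * a₁) := Real.exp_log hr
    rw [hform q, heq, hb, ha]
    have hmc : (-(2 + 2 * a₁)) / (2 - 2 * a₁) * (2 - 2 * a₁) = -(2 + 2 * a₁) :=
      div_mul_cancel₀ _ hne
    nlinarith [hmc]
  · -- b₃ = 0, a₃ < 0 : B = a₃ + b₃ - b₃a₁ = a₃ < 0
    obtain ⟨x, hx⟩ := aux_top (2 - 2 * a₁) (a₃ + b₃ - b₃ * a₁) (2 + 2 * a₁)
      (b₃ + b₃ * a₁ - a₃) (by rw [hb]; simpa using ha)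
    exact key x (by rw [hform x]; exact hx)
  · -- b₃ ≠ 0, a₃ ≤ 0 : evaluate at q = -2/b₃
    set q : ℝ := -2 / b₃ with hqdef
    have hq2 : 2 + b₃ * q = 0 := by
      rw [hqdef]; field_simp; ring
    apply key q
    have hlin : 2 * a₁ - a₃ * q + b₃ * a₁ * q = 2 * a₃ / b₃ := by
      rw [hqdef]; field_simp; ring
    have hval : n q = (1 - Real.exp q) * (2 * a₃ / b₃) := by
      rw [hn q, hq2, hlin]; ring
    rw [hval]
    rcases lt_or_gt_of_ne hb with hbneg | hbpos
    · -- b₃ < 0: q > 0, so 1 - exp q < 0; and 2a₃/b₃ ≥ 0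
      have hqpos : 0 < q := by
        rw [hqdef]; apply div_pos_of_neg_of_neg <;> linarith
      have h1 : 1 - Real.exp q < 0 := by
        nlinarith [Real.add_one_le_exp q]
      have h2 : 0 ≤ 2 * a₃ / b₃ := by
        rw [div_nonneg_iff]; right; constructor <;> linarith
      exact mul_nonpos_of_nonpos_of_nonneg h1.le h2
    · -- b₃ > 0: q < 0, so 1 - exp q > 0; and 2a₃/b₃ ≤ 0
      have hqneg : q < 0 := by
        rw [hqdef]; apply div_neg_of_neg_of_pos <;> linarith
      have h1 : 0 ≤ 1 - Real.exp q := by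
        have : Real.exp q ≤ 1 := Real.exp_le_one_iff.mpr hqneg.le
        linarith
      have h2 : 2 * a₃ / b₃ ≤ 0 := by
        rw [div_nonpos_iff]; right; constructor <;> linarith
      exact mul_nonpos_of_nonneg_of_nonpos h1 h2
  · -- b₃ < 0, a₃ > 0, a₁ < a₃/b₃ + 1 : B < 0
    have hB : a₃ + b₃ - b₃ * a₁ < 0 := by
      have : b₃ * a₁ > b₃ * (a₃ / b₃ + 1) := by
        exact (mul_lt_mul_left_of_neg hb).mpr hA
      have hbne : b₃ ≠ 0 := ne_of_lt hb
      rw [mul_add, mul_div_cancel₀ _ hbne] at this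
      linarith
    obtain ⟨x, hx⟩ := aux_top (2 - 2 * a₁) (a₃ + b₃ - b₃ * a₁) (2 + 2 * a₁)
      (b₃ + b₃ * a₁ - a₃) hB
    exact key x (by rw [hform x]; exact hx)
  · -- b₃ > 0, a₃ > 0, a₁ > a₃/b₃ - 1 : D > 0
    have hD : 0 < b₃ + b₃ * a₁ - a₃ := by
      have : b₃ * a₁ > b₃ * (a₃ / b₃ - 1) := mul_lt_mul_of_pos_left hA hb
      have hbne : b₃ ≠ 0 := ne_of_gt hb
      rw [mul_sub, mul_div_cancel₀ _ hbne] at this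
      linarith
    obtain ⟨x, hx⟩ := aux_bot (2 - 2 * a₁) (a₃ + b₃ - b₃ * a₁) (2 + 2 * a₁)
      (b₃ + b₃ * a₁ - a₃) hD
    exact key x (by rw [hform x]; exact hx)
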